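/- The sequence (n/log n)·d_max converges to 1 in probability as n → ∞; that is, for every ε > 0, P(|(n/log n)·d_max − 1| > ε) → 0 as n → ∞. -/

import Mathlib

open Finset MeasureTheory ProbabilityTheory

/-- The points `x 0, …, x (n-1)` rearranged in nondecreasing order
(the order statistics `X_(1) ≤ … ≤ X_(n)`). -/
noncomputable def sortedPts {n : ℕ} (x : Fin n → ℝ) : Fin n → ℝ :=
  x ∘ Tuple.sort x

/-- The largest spacing between `n` points of `[0,1]` regarded as points on a
circle of perimeter `1`: with `y = sortedPts x` the order statistics, this is
`max {y_(2)-y_(1), …, y_(n)-y_(n-1), 1-y_(n)+y_(1)}`. -/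
noncomputable def maxSpacing {n : ℕ} (x : Fin n → ℝ) : ℝ :=
  ⨆ i : Fin n,
    if h : (i : ℕ) + 1 < n then sortedPts x ⟨(i : ℕ) + 1, h⟩ - sortedPts x i
    else 1 - sortedPts x i + sortedPts x ⟨0, i.pos⟩

/-- The smallest spacing between `n` points of `[0,1]` regarded as points on a
circle of perimeter `1`. -/
noncomputable def minSpacing {n : ℕ} (x : Fin n → ℝ) : ℝ :=
  ⨅ i : Fin n,
    if h : (i : ℕ) + 1 < n then sortedPts x ⟨(i : ℕ) + 1, h⟩ - sortedPts x i
    else 1 - sortedPts x i + sortedPts x ⟨0, i.pos⟩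


namespace MSPwrap
open ENNReal
namespace MSP

variable {n : ℕ} {x : Fin n → ℝ}

/-- the gap function -/
noncomputable def gap (x : Fin n → ℝ) (i : Fin n) : ℝ :=
  if h : (i : ℕ) + 1 < n then sortedPts x ⟨(i : ℕ) + 1, h⟩ - sortedPts x i
  else 1 - sortedPts x i + sortedPts x ⟨0, i.pos⟩

lemma maxSpacing_eq (x : Fin n → ℝ) : maxSpacing x = ⨆ i, gap x i := rfl

lemma gap_le (i : Fin n) : gap x i ≤ maxSpacing x :=
  le_ciSup (Set.finite_range _).bddAbove i

lemma exists_gap_ge (hn : 0 < n) {t : ℝ} (h : t ≤ maxSpacing x) :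
    ∃ i, t ≤ gap x i := by
  haveI : Nonempty (Fin n) := Fin.pos_iff_nonempty.1 hn
  obtain ⟨i, hi⟩ := Finite.exists_max (gap x)
  exact ⟨i, le_trans h (ciSup_le hi)⟩

lemma sorted_mono : Monotone (sortedPts x) := Tuple.monotone_sort x

lemma exists_sorted_eq (j : Fin n) : ∃ k, x j = sortedPts x k :=
  ⟨(Tuple.sort x)⁻¹ j, by simp [sortedPts]⟩

lemma sorted_mem (hx : ∀ i, x i ∈ Set.Icc (0:ℝ) 1) (k : Fin n) :
    sortedPts x k ∈ Set.Icc (0:ℝ) 1 := hx _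

lemma fract_cases {d : ℝ} (h1 : -1 ≤ d) (h2 : d ≤ 1) :
    Int.fract d = 0 ∨ Int.fract d = d ∨ Int.fract d = d + 1 := by
  rcases eq_or_lt_of_le h2 with h | h
  · left; rw [h]; simp
  rcases le_or_gt 0 d with h0 | h0
  · right; left; exact Int.fract_eq_self.2 ⟨h0, h⟩
  rcases eq_or_lt_of_le h1 with hm | hm
  · left; rw [← hm]
    have := Int.fract_intCast (R := ℝ) (-1)
    simpa using this
  · right; right
    have : Int.fract (d + 1) = d + 1 := Int.fract_eq_self.2 ⟨by linarith, by linarith⟩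
    rw [← this]
    exact_mod_cast (Int.fract_add_intCast d 1).symm

/-- the half-open arc of length `s` starting at `a`, as a subset of the circle
(viewed as a subset of `ℝ` via `Int.fract`). -/
def arc (a s : ℝ) : Set ℝ := {y | Int.fract (y - a) < s}

lemma arc_measurableSet (a s : ℝ) : MeasurableSet (arc a s) :=
  (measurable_fract.comp (measurable_id.sub_const a)) measurableSet_Iio

lemma mem_arc {a s y : ℝ} : y ∈ arc a s ↔ Int.fract (y - a) < s := Iff.rfl

/-- From a gap of size `≥ t` we get a point `c` such that the arc `(c, c+t)` is
free of points. -/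
lemma exists_free_of_le_maxSpacing (hn : 0 < n)
    (hx : ∀ i, x i ∈ Set.Icc (0:ℝ) 1) {t : ℝ} (ht : 0 < t) (ht1 : t ≤ 1)
    (h : t ≤ maxSpacing x) :
    ∃ c ∈ Set.Ico (0:ℝ) 1, ∀ j, Int.fract (x j - c) ∉ Set.Ioo 0 t := by
  obtain ⟨i, hi⟩ := exists_gap_ge hn h
  set y := sortedPts x with hy
  have hymem : ∀ k, y k ∈ Set.Icc (0:ℝ) 1 := sorted_mem hx
  -- first get c in [0,1]
  have main : ∃ c ∈ Set.Icc (0:ℝ) 1, ∀ j, Int.fract (x j - c) ∉ Set.Ioo 0 t := by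
    unfold gap at hi
    split_ifs at hi with hcase
    · -- interior gap
      refine ⟨y i, hymem i, fun j => ?_⟩
      obtain ⟨k, hk⟩ := exists_sorted_eq (x := x) j
      rw [hk, ← hy]
      set d := y k - y i with hd
      have hd1 : -1 ≤ d := by
        have := (hymem k).1; have := (hymem i).2; simp [hd]; linarith
      have hd2 : d ≤ 1 := by
        have := (hymem k).2; have := (hymem i).1; simp [hd]; linarith
      rintro ⟨hpos, hlt⟩
      rcases fract_cases hd1 hd2 with hf | hf | hf
      · rw [hf] at hpos; exact lt_irrefl _ hpos
      · rw [hf] at hpos hlt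
        -- d ∈ (0,t) : impossible
        have hki : ¬ (k : ℕ) ≤ (i : ℕ) := by
          intro hle
          have : y k ≤ y i := sorted_mono (by exact_mod_cast hle)
          simp [hd] at hpos; linarith
        push_neg at hki
        have : y ⟨(i:ℕ)+1, hcase⟩ ≤ y k := sorted_mono (by exact_mod_cast hki)
        have : t ≤ d := by simp [hd]; linarith
        linarith
      · rw [hf] at hlt
        have h1 : t ≤ 1 - y i + y k := by
          have := (hymem ⟨(i:ℕ)+1, hcase⟩).2
          have := (hymem k).1
          linarith
        simp [hd] at hlt; linarith
    · -- wrap-around gap : i is the last index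
      refine ⟨y i, hymem i, fun j => ?_⟩
      obtain ⟨k, hk⟩ := exists_sorted_eq (x := x) j
      rw [hk, ← hy]
      set d := y k - y i with hd
      have hd1 : -1 ≤ d := by
        have := (hymem k).1; have := (hymem i).2; simp [hd]; linarith
      have hd2 : d ≤ 1 := by
        have := (hymem k).2; have := (hymem i).1; simp [hd]; linarith
      rintro ⟨hpos, hlt⟩
      have hki : (k:ℕ) ≤ (i:ℕ) := by
        push_neg at hcase
        have := k.isLt; omega
      have hdle : d ≤ 0 := by
        have : y k ≤ y i := sorted_mono (by exact_mod_cast hki)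
        simp [hd]; linarith
      rcases fract_cases hd1 hd2 with hf | hf | hf
      · rw [hf] at hpos; exact lt_irrefl _ hpos
      · rw [hf] at hpos; linarith
      · rw [hf] at hlt
        have h0 : y ⟨0, i.pos⟩ ≤ y k := sorted_mono (by exact_mod_cast Nat.zero_le _)
        have : t ≤ 1 - y i + y k := by linarith
        simp [hd] at hlt; linarith
  obtain ⟨c, hc, hfree⟩ := main
  rcases eq_or_lt_of_le hc.2 with hc1 | hc1
  · refine ⟨0, ⟨le_refl _, one_pos⟩, fun j => ?_⟩
    have : Int.fract (x j - 0) = Int.fract (x j - c) := by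
      rw [hc1]; rw [show x j - (1:ℝ) = x j - 0 - (1:ℤ) by push_cast; ring,
        Int.fract_sub_intCast]
    rw [this]
    exact hfree j
  · exact ⟨c, ⟨hc.1, hc1⟩, hfree⟩

lemma shift_anchor {c a δ s t : ℝ} (hc : ∀ j, Int.fract (x j - c) ∉ Set.Ioo 0 t)
    (h1 : c < a) (h2 : a ≤ c + δ) (hs : 0 < s) (hst : δ + s ≤ t) (ht1 : t < 1) :
    ∀ j, s ≤ Int.fract (x j - a) := by
  intro j
  by_contra hlt
  push_neg at hlt
  set r := Int.fract (x j - a) with hr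
  have hr0 : 0 ≤ r := Int.fract_nonneg _
  have key : Int.fract (x j - c) = r + (a - c) := by
    have hxc : x j - c = (⌊x j - a⌋ : ℝ) + (r + (a - c)) := by
      have hfl := Int.floor_add_fract (x j - a)
      rw [hr]; linarith
    rw [hxc, Int.fract_intCast_add]
    refine Int.fract_eq_self.2 ⟨by linarith, by linarith⟩
  exact hc j ⟨by rw [key]; linarith, by rw [key]; linarith⟩

lemma exists_grid_anchor {c δ : ℝ} (hc : c ∈ Set.Ico (0:ℝ) 1)
    (hδ0 : 0 < δ) (hδ1 : δ ≤ 1) :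
    ∃ k : ℕ, k < ⌈1/δ⌉₊ ∧ ∃ a : ℝ, c < a ∧ a ≤ c + δ ∧
      ∀ y : ℝ, Int.fract (y - a) = Int.fract (y - (k:ℝ)*δ) := by
  by_cases hcase : ⌊c/δ⌋₊ + 1 < ⌈1/δ⌉₊
  · refine ⟨⌊c/δ⌋₊ + 1, hcase, ((⌊c/δ⌋₊:ℝ) + 1) * δ, ?_, ?_, ?_⟩
    · have := Nat.lt_floor_add_one (c/δ)
      calc c = (c/δ) * δ := by field_simp
        _ < ((⌊c/δ⌋₊:ℝ) + 1) * δ := by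
            exact mul_lt_mul_of_pos_right this hδ0
    · have h1 : (⌊c/δ⌋₊:ℝ) ≤ c/δ := Nat.floor_le (div_nonneg hc.1 hδ0.le)
      have h2 : (⌊c/δ⌋₊:ℝ) * δ ≤ (c/δ) * δ := mul_le_mul_of_nonneg_right h1 hδ0.le
      rw [div_mul_cancel₀ c (ne_of_gt hδ0)] at h2
      linarith
    · intro y; push_cast; ring_nf
  · have hM1 : 1 ≤ ⌈1/δ⌉₊ := Nat.one_le_ceil_iff.2 (by positivity)
    refine ⟨0, hM1, 1, hc.2, ?_, ?_⟩
    · -- 1 ≤ c + δ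
      push_neg at hcase
      have h2 : (1:ℝ)/δ ≤ ⌈1/δ⌉₊ := Nat.le_ceil _
      have h3 : (⌈1/δ⌉₊:ℝ) ≤ (⌊c/δ⌋₊:ℝ) + 1 := by exact_mod_cast hcase
      have h4 : (⌊c/δ⌋₊:ℝ) ≤ c/δ := Nat.floor_le (div_nonneg hc.1 hδ0.le)
      have : (1:ℝ)/δ ≤ c/δ + 1 := by linarith
      have := mul_le_mul_of_nonneg_right this hδ0.le
      rw [div_mul_cancel₀ _ (ne_of_gt hδ0), add_mul, div_mul_cancel₀ _ (ne_of_gt hδ0)] at this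
      linarith
    · intro y
      rw [show y - 1 = y - (0:ℝ)*δ - (1:ℤ) by push_cast; ring, Int.fract_sub_intCast]
      norm_num

/-- Deterministic upper-tail lemma: a large max spacing forces an empty grid arc. -/
lemma upper_det (hn : 0 < n) (hx : ∀ i, x i ∈ Set.Icc (0:ℝ) 1)
    {δ s t : ℝ} (hδ0 : 0 < δ) (hδ1 : δ ≤ 1) (hs : 0 < s) (hst : δ + s ≤ t)
    (ht1 : t < 1) (h : t ≤ maxSpacing x) :
    ∃ k : ℕ, k < ⌈1/δ⌉₊ ∧ ∀ j, x j ∉ arc ((k:ℝ)*δ) s := by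
  have ht0 : 0 < t := by linarith
  obtain ⟨c, hc, hfree⟩ := exists_free_of_le_maxSpacing hn hx ht0 ht1.le h
  obtain ⟨k, hk, a, ha1, ha2, ha3⟩ := exists_grid_anchor hc hδ0 hδ1
  refine ⟨k, hk, fun j hmem => ?_⟩
  have := shift_anchor hfree ha1 ha2 hs hst ht1 j
  rw [ha3 (x j)] at this
  exact absurd hmem (not_lt.2 this)

/-- Deterministic lower-tail lemma: an empty arc forces a large max spacing. -/
lemma lower_det (hn : 0 < n) (hx : ∀ i, x i ∈ Set.Icc (0:ℝ) 1)
    {a t : ℝ} (ht : 0 < t) (ha : 0 ≤ a) (hat : a + t ≤ 1)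
    (h : ∀ j, x j ∉ arc a t) : t ≤ maxSpacing x := by
  set y := sortedPts x with hy
  have hymem : ∀ k, y k ∈ Set.Icc (0:ℝ) 1 := sorted_mem hx
  have key : ∀ k : Fin n, y k < a ∨ a + t ≤ y k := by
    intro k
    obtain ⟨j, hj⟩ : ∃ j, y k = x j := ⟨Tuple.sort x k, rfl⟩
    have hfr : t ≤ Int.fract (y k - a) := by
      have := h j; rw [mem_arc] at this; push_neg at this; rw [← hj] at this
      exact this
    set d := y k - a with hd
    have hd1 : -1 ≤ d := by have := (hymem k).1; simp [hd]; linarith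
    have hd2 : d ≤ 1 := by have := (hymem k).2; simp [hd]; linarith
    rcases fract_cases hd1 hd2 with hf | hf | hf
    · rw [hf] at hfr; linarith
    · right; rw [hf] at hfr; simp [hd] at hfr ⊢; linarith
    · left
      have := Int.fract_lt_one (y k - a)
      rw [hf] at this; simp [hd] at this ⊢; linarith
  by_cases hall : ∀ k, a + t ≤ y k
  · -- use the wrap-around gap at the last index
    have hi : n - 1 < n := Nat.sub_lt hn one_pos
    set i : Fin n := ⟨n - 1, hi⟩ with hidef
    have hnot : ¬ ((i:ℕ) + 1 < n) := by simp [hidef]; omega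
    have hgap : gap x i = 1 - y i + y ⟨0, i.pos⟩ := by
      rw [gap, dif_neg hnot]
    refine le_trans ?_ (gap_le i)
    rw [hgap]
    have := hall ⟨0, i.pos⟩
    have := (hymem i).2
    linarith
  · push_neg at hall
    obtain ⟨k0, hk0⟩ := hall
    have hk0' : y k0 < a := by rcases key k0 with h' | h'; exact h'; linarith
    set K : Finset (Fin n) := Finset.univ.filter (fun k => y k < a) with hK
    have hKne : K.Nonempty := ⟨k0, by simp [hK, hk0']⟩
    set km := K.max' hKne with hkm
    have hkmK : km ∈ K := K.max'_mem hKne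
    have hkml : y km < a := by simp [hK] at hkmK; exact hkmK
    by_cases hcase : (km:ℕ) + 1 < n
    · have hnext : a + t ≤ y ⟨(km:ℕ)+1, hcase⟩ := by
        rcases key ⟨(km:ℕ)+1, hcase⟩ with h' | h'
        · exfalso
          have hmem : (⟨(km:ℕ)+1, hcase⟩ : Fin n) ∈ K := by simp [hK, h']
          have := K.le_max' _ hmem
          rw [← hkm] at this
          have : ((km:ℕ)+1) ≤ (km:ℕ) := by exact_mod_cast this
          omega
        · exact h'
      refine le_trans ?_ (gap_le km)
      rw [gap, dif_pos hcase]
      linarith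
    · refine le_trans ?_ (gap_le km)
      rw [gap, dif_neg hcase]
      have h0 : (0:ℝ) ≤ y ⟨0, km.pos⟩ := (hymem _).1
      linarith

noncomputable def nu : Measure ℝ := volume.restrict (Set.Icc (0:ℝ) 1)

instance : IsProbabilityMeasure nu :=
  ⟨by rw [nu, Measure.restrict_apply_univ, Real.volume_Icc]; norm_num⟩

lemma nu_Icc_eq_one : nu (Set.Icc (0:ℝ) 1) = 1 := by
  rw [nu, Measure.restrict_apply measurableSet_Icc, Set.inter_self, Real.volume_Icc]
  norm_num

lemma nu_Ico {u v : ℝ} (h0 : 0 ≤ u) (h1 : v ≤ 1) :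
    nu (Set.Ico u v) = ENNReal.ofReal (v - u) := by
  rw [nu, Measure.restrict_apply measurableSet_Ico]
  rcases le_or_gt u v with h | h
  · have hsub : Set.Ico u v ⊆ Set.Icc 0 1 := fun y hy =>
      ⟨le_trans h0 hy.1, le_trans hy.2.le h1⟩
    rw [Set.inter_eq_self_of_subset_left hsub, Real.volume_Ico]
  · rw [Set.Ico_eq_empty (not_lt.2 h.le)]
    rw [Set.empty_inter, measure_empty, Eq.comm, ENNReal.ofReal_eq_zero]
    linarith

lemma Ico_subset_arc {a s : ℝ} (ha : 0 ≤ a) (h1 : a + s ≤ 1) :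
    Set.Ico a (a + s) ⊆ arc a s := by
  intro y hy
  rw [mem_arc, Int.fract_eq_self.2 ⟨by linarith [hy.1], by linarith [hy.2, ha]⟩]
  linarith [hy.2]

/-- lower bound for the measure of an arc (general anchor, possibly wrapping). -/
lemma ofReal_le_nu_arc {a s : ℝ} (ha0 : 0 ≤ a) (ha1 : a < 1)
    (hs0 : 0 < s) (hs1 : s < 1) : ENNReal.ofReal s ≤ nu (arc a s) := by
  rcases le_or_gt (a + s) 1 with hc | hc
  · calc ENNReal.ofReal s = nu (Set.Ico a (a + s)) := by
          rw [nu_Ico ha0 hc]; ring_nf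
      _ ≤ nu (arc a s) := measure_mono (Ico_subset_arc ha0 hc)
  · -- wrapping case : arc contains [a,1) ∪ [0, a+s-1)
    have hsub1 : Set.Ico a 1 ⊆ arc a s := by
      intro y hy
      rw [mem_arc, Int.fract_eq_self.2 ⟨by linarith [hy.1], by linarith [hy.2]⟩]
      linarith [hy.2]
    have hsub2 : Set.Ico 0 (a + s - 1) ⊆ arc a s := by
      intro y hy
      have h1 : y - a < 0 := by linarith [hy.2]
      have h2 : (0:ℝ) ≤ y - a + 1 := by linarith [hy.1]
      rw [mem_arc]
      have : Int.fract (y - a) = Int.fract (y - a + 1) := by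
        exact_mod_cast (Int.fract_add_intCast (y - a) 1).symm
      rw [this, Int.fract_eq_self.2 ⟨h2, by linarith [hy.2]⟩]
      linarith [hy.2]
    have hdisj : Disjoint (Set.Ico (0:ℝ) (a + s - 1)) (Set.Ico a 1) := by
      rw [Set.disjoint_left]
      rintro y ⟨hy1, hy2⟩ ⟨hy3, hy4⟩
      linarith
    calc ENNReal.ofReal s
        = ENNReal.ofReal (a + s - 1 - 0) + ENNReal.ofReal (1 - a) := by
          rw [← ENNReal.ofReal_add (by linarith) (by linarith)]; ring_nf
      _ = nu (Set.Ico 0 (a + s - 1)) + nu (Set.Ico a 1) := by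
          rw [nu_Ico le_rfl (by linarith), nu_Ico ha0 le_rfl]
      _ = nu (Set.Ico 0 (a + s - 1) ∪ Set.Ico a 1) := by
          rw [measure_union hdisj measurableSet_Ico]
      _ ≤ nu (arc a s) := measure_mono (Set.union_subset hsub2 hsub1)

/-- upper bound for the measure of a non-wrapping arc. -/
lemma nu_arc_le {a s : ℝ} (ha0 : 0 ≤ a) (h1 : a + s ≤ 1) (hs0 : 0 < s) :
    nu (arc a s) ≤ ENNReal.ofReal s := by
  have hsub : arc a s ∩ Set.Icc 0 1 ⊆ Set.Ico a (a + s) ∪ {1} := by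
    rintro y ⟨hmem, hy0, hy1⟩
    rcases eq_or_lt_of_le hy1 with h | h
    · right; simp [h]
    rcases le_or_gt a y with hay | hay
    · left
      rw [mem_arc, Int.fract_eq_self.2 ⟨by linarith, by linarith⟩] at hmem
      exact ⟨hay, by linarith⟩
    · exfalso
      have hfr : Int.fract (y - a) = y - a + 1 := by
        have : Int.fract (y - a) = Int.fract (y - a + 1) := by
          exact_mod_cast (Int.fract_add_intCast (y - a) 1).symm
        rw [this, Int.fract_eq_self.2 ⟨by linarith, by linarith⟩]
      rw [mem_arc, hfr] at hmem
      linarith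
  calc nu (arc a s) = volume (arc a s ∩ Set.Icc 0 1) := by
        rw [nu, Measure.restrict_apply (arc_measurableSet a s)]
    _ ≤ volume (Set.Ico a (a + s) ∪ {1}) := measure_mono hsub
    _ ≤ volume (Set.Ico a (a + s)) + volume ({1} : Set ℝ) := measure_union_le _ _
    _ = ENNReal.ofReal s := by
        rw [Real.volume_Ico, Real.volume_singleton, add_zero]; ring_nf



lemma second_moment {Ω : Type*} [MeasurableSpace Ω] {μ : Measure Ω}
    [IsProbabilityMeasure μ] (m : ℕ) (A : ℕ → Set Ω)
    (hA : ∀ k, MeasurableSet (A k)) (p : ℝ≥0∞)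
    (hp : ∀ k < m, p ≤ μ (A k))
    (hpair : ∀ k < m, ∀ l < m, k ≠ l → μ (A k ∩ A l) ≤ p * p) :
    μ ((⋃ k ∈ Finset.range m, A k)ᶜ) * ((m : ℝ≥0∞) * p) ≤ 1 := by
  classical
  set U : Set Ω := ⋃ k ∈ Finset.range m, A k with hU
  have hUm : MeasurableSet U := by
    exact Finset.measurableSet_biUnion _ (fun k _ => hA k)
  set f : Ω → ℝ≥0∞ := fun ω => ∑ k ∈ Finset.range m, (A k).indicator 1 ω with hf
  have hfmeas : ∀ k, Measurable ((A k).indicator (1 : Ω → ℝ≥0∞)) :=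
    fun k => measurable_one.indicator (hA k)
  have hfm : Measurable f := by
    apply Finset.measurable_sum
    exact fun k _ => hfmeas k
  set S1 : ℝ≥0∞ := ∑ k ∈ Finset.range m, μ (A k) with hS1
  have hI1 : ∫⁻ ω, f ω ∂μ = S1 := by
    rw [hf, lintegral_finset_sum _ (fun k _ => hfmeas k)]
    exact Finset.sum_congr rfl fun k _ => lintegral_indicator_one (hA k)
  -- second moment
  have hI2 : ∫⁻ ω, f ω * f ω ∂μ = ∑ k ∈ Finset.range m, ∑ l ∈ Finset.range m,
      μ (A k ∩ A l) := by
    have hpt : ∀ ω, f ω * f ω = ∑ k ∈ Finset.range m, ∑ l ∈ Finset.range m,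
        (A k ∩ A l).indicator 1 ω := by
      intro ω
      rw [hf, Finset.sum_mul_sum]
      refine Finset.sum_congr rfl fun k _ => Finset.sum_congr rfl fun l _ => ?_
      have := Set.inter_indicator_mul (s := A k) (t := A l)
        (1 : Ω → ℝ≥0∞) (1 : Ω → ℝ≥0∞) ω
      rw [Set.inter_indicator_one]; rfl
    simp_rw [hpt]
    rw [lintegral_finset_sum _ (fun k _ => Finset.measurable_sum _
      (fun l _ => measurable_one.indicator ((hA k).inter (hA l))))]
    refine Finset.sum_congr rfl fun k _ => ?_
    rw [lintegral_finset_sum _ (fun l _ => measurable_one.indicator ((hA k).inter (hA l)))]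
    exact Finset.sum_congr rfl fun l _ => lintegral_indicator_one ((hA k).inter (hA l))
  have hS1ub : S1 ≤ m := by
    calc S1 ≤ ∑ _k ∈ Finset.range m, 1 := Finset.sum_le_sum (fun k _ => prob_le_one)
      _ = m := by simp
  have hS1top : S1 ≠ ⊤ := (lt_of_le_of_lt hS1ub (by simp)).ne
  have hS2 : ∫⁻ ω, f ω * f ω ∂μ ≤ S1 + S1 * S1 := by
    rw [hI2]
    have hterm : ∀ k ∈ Finset.range m, ∑ l ∈ Finset.range m, μ (A k ∩ A l)
        ≤ μ (A k) + (m : ℝ≥0∞) * (p * p) := by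
      intro k hk
      rw [Finset.mem_range] at hk
      calc ∑ l ∈ Finset.range m, μ (A k ∩ A l)
          ≤ ∑ l ∈ Finset.range m, (if l = k then μ (A k) else p * p) := by
            refine Finset.sum_le_sum fun l hl => ?_
            rw [Finset.mem_range] at hl
            by_cases hlk : l = k
            · simp [hlk]
            · rw [if_neg hlk]; exact hpair k hk l hl (Ne.symm hlk)
        _ ≤ ∑ l ∈ Finset.range m, ((if l = k then μ (A k) else 0) + p * p) := by
            refine Finset.sum_le_sum fun l hl => ?_
            by_cases hlk : l = k <;> simp [hlk]
        _ = μ (A k) + (m : ℝ≥0∞) * (p * p) := by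
            rw [Finset.sum_add_distrib,
              Finset.sum_ite_eq' (Finset.range m) k (fun _ => μ (A k))]
            simp [Finset.mem_range.2 hk, mul_comm]
    calc ∑ k ∈ Finset.range m, ∑ l ∈ Finset.range m, μ (A k ∩ A l)
        ≤ ∑ k ∈ Finset.range m, (μ (A k) + (m : ℝ≥0∞) * (p * p)) :=
          Finset.sum_le_sum hterm
      _ = S1 + (m : ℝ≥0∞) * ((m : ℝ≥0∞) * (p * p)) := by
          rw [Finset.sum_add_distrib]; simp [hS1, mul_comm]
      _ ≤ S1 + S1 * S1 := by
          refine add_le_add le_rfl ?_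
          have hmp : (m : ℝ≥0∞) * p ≤ S1 := by
            calc (m : ℝ≥0∞) * p = ∑ _k ∈ Finset.range m, p := by simp [mul_comm]
              _ ≤ S1 := Finset.sum_le_sum (fun k hk => hp k (Finset.mem_range.1 hk))
          calc (m : ℝ≥0∞) * ((m:ℝ≥0∞) * (p * p)) = ((m:ℝ≥0∞)*p) * ((m:ℝ≥0∞)*p) := by ring
            _ ≤ S1 * S1 := mul_le_mul' hmp hmp
  -- Cauchy-Schwarz
  set g : Ω → ℝ≥0∞ := U.indicator 1 with hg
  have hgm : Measurable g := measurable_one.indicator hUm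
  have hfg : ∀ ω, f ω = f ω * g ω := by
    intro ω
    by_cases hω : ω ∈ U
    · rw [hg]; simp [Set.indicator_of_mem hω]
    · have : f ω = 0 := by
        rw [hf]
        refine Finset.sum_eq_zero fun k hk => ?_
        have : ω ∉ A k := fun hmem => hω (Set.mem_biUnion hk hmem)
        simp [Set.indicator_of_notMem this]
      rw [this, zero_mul]
  have hCS : S1 ≤ (∫⁻ ω, f ω ^ (2:ℝ) ∂μ) ^ (1/(2:ℝ)) *
      (∫⁻ ω, g ω ^ (2:ℝ) ∂μ) ^ (1/(2:ℝ)) := by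
    rw [← hI1]
    have : ∫⁻ ω, f ω ∂μ = ∫⁻ ω, (f * g) ω ∂μ := by
      refine lintegral_congr fun ω => ?_
      exact hfg ω
    rw [this]
    exact ENNReal.lintegral_mul_le_Lp_mul_Lq μ (Real.holderConjugate_iff_eq_conjExponent
      (by norm_num) |>.2 (by norm_num)) hfm.aemeasurable hgm.aemeasurable
  have hfsq : ∀ ω, f ω ^ (2:ℝ) = f ω * f ω := by
    intro ω
    rw [show (2:ℝ) = ((2:ℕ):ℝ) by norm_num, ENNReal.rpow_natCast, sq]
  have hgsq : ∫⁻ ω, g ω ^ (2:ℝ) ∂μ = μ U := by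
    have : ∀ ω, g ω ^ (2:ℝ) = g ω := by
      intro ω
      rw [hg]
      by_cases hω : ω ∈ U
      · simp [Set.indicator_of_mem hω]
      · simp [Set.indicator_of_notMem hω]
    simp_rw [this]
    rw [hg, lintegral_indicator_one hUm]
  -- squaring Cauchy-Schwarz
  have hsq : S1 * S1 ≤ (S1 + S1 * S1) * μ U := by
    have h2 : ∫⁻ ω, f ω ^ (2:ℝ) ∂μ ≤ S1 + S1 * S1 := by
      calc ∫⁻ ω, f ω ^ (2:ℝ) ∂μ = ∫⁻ ω, f ω * f ω ∂μ := by simp_rw [hfsq]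
        _ ≤ S1 + S1 * S1 := hS2
    have hCS' : S1 ≤ (S1 + S1*S1) ^ (1/(2:ℝ)) * (μ U) ^ (1/(2:ℝ)) := by
      refine le_trans hCS ?_
      rw [hgsq]
      gcongr
    calc S1 * S1 ≤ ((S1 + S1*S1) ^ (1/(2:ℝ)) * (μ U) ^ (1/(2:ℝ))) *
          ((S1 + S1*S1) ^ (1/(2:ℝ)) * (μ U) ^ (1/(2:ℝ))) := mul_le_mul' hCS' hCS'
      _ = (S1 + S1 * S1) * μ U := by
          rw [show ∀ a b : ℝ≥0∞, (a * b) * (a * b) = (a * a) * (b * b) by intros; ring]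
          rw [← ENNReal.rpow_add_of_nonneg _ _ (by norm_num) (by norm_num),
            ← ENNReal.rpow_add_of_nonneg _ _ (by norm_num) (by norm_num)]
          norm_num
  -- conclude
  have hkey : S1 ≤ (1 + S1) * μ U := by
    rcases eq_or_ne S1 0 with h0 | h0
    · rw [h0]; exact zero_le
    · have : S1 * S1 ≤ S1 * ((1 + S1) * μ U) := by
        calc S1 * S1 ≤ (S1 + S1 * S1) * μ U := hsq
          _ = S1 * ((1 + S1) * μ U) := by ring
      exact (ENNReal.mul_le_mul_iff_right h0 hS1top).1 this
  have hmp : (m : ℝ≥0∞) * p ≤ S1 := by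
    calc (m : ℝ≥0∞) * p = ∑ _k ∈ Finset.range m, p := by simp [mul_comm]
      _ ≤ S1 := Finset.sum_le_sum (fun k hk => hp k (Finset.mem_range.1 hk))
  have hcompl : μ Uᶜ = 1 - μ U := prob_compl_eq_one_sub hUm
  have hstep : (1 - μ U) * S1 ≤ μ U := by
    have h1 : (1 - μ U) * S1 = S1 - μ U * S1 := by
      rw [ENNReal.sub_mul (fun _ _ => hS1top), one_mul]
    rw [h1, tsub_le_iff_right]
    calc S1 ≤ (1 + S1) * μ U := hkey
      _ = μ U + S1 * μ U := by ring
      _ ≤ μ U + μ U * S1 := by rw [mul_comm]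
  calc μ Uᶜ * ((m : ℝ≥0∞) * p) = (1 - μ U) * ((m:ℝ≥0∞)*p) := by rw [hcompl]
    _ ≤ (1 - μ U) * S1 := mul_le_mul' le_rfl hmp
    _ ≤ μ U := hstep
    _ ≤ 1 := prob_le_one
section prob
variable {Ωt : Type*} [MeasurableSpace Ωt] {μ : Measure Ωt} [IsProbabilityMeasure μ]
  {n : ℕ} {X : Fin n → Ωt → ℝ}

lemma meas_iInter_preimage (hX : ∀ i, Measurable (X i))
    (hind : iIndepFun X μ)
    (hu : ∀ i, Measure.map (X i) μ = nu)
    {T : Set ℝ} (hT : MeasurableSet T) :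
    μ (⋂ j, X j ⁻¹' T) = (nu T) ^ n := by
  rw [hind.meas_iInter (fun i => ⟨T, hT, rfl⟩)]
  have h1 : ∀ i, μ (X i ⁻¹' T) = nu T := fun i => by
    rw [← hu i, Measure.map_apply (hX i) hT]
  simp [h1, Finset.prod_const, Finset.card_univ]

lemma meas_bad (hX : ∀ i, Measurable (X i))
    (hu : ∀ i, Measure.map (X i) μ = nu) :
    μ {ω | ¬ ∀ i, X i ω ∈ Set.Icc (0:ℝ) 1} = 0 := by
  have h1 : {ω | ¬ ∀ i, X i ω ∈ Set.Icc (0:ℝ) 1} = ⋃ i, X i ⁻¹' (Set.Icc (0:ℝ) 1)ᶜ := by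
    ext ω; simp [Set.mem_iUnion]
  rw [h1]
  refine le_antisymm (le_trans (measure_iUnion_le _) ?_) zero_le
  have h2 : ∀ i : Fin n, μ (X i ⁻¹' (Set.Icc (0:ℝ) 1)ᶜ) = 0 := by
    intro i
    rw [← Measure.map_apply (hX i) measurableSet_Icc.compl, hu i]
    have : nu (Set.Icc (0:ℝ) 1)ᶜ = 1 - nu (Set.Icc (0:ℝ) 1) :=
      prob_compl_eq_one_sub measurableSet_Icc
    rw [this]
    have h3 : nu (Set.Icc (0:ℝ) 1) = 1 := nu_Icc_eq_one
    rw [h3]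
    simp
  simp only [Set.preimage_compl] at h2
  rw [tsum_fintype]
  simp [h2]

lemma nu_arc_compl_le {a s : ℝ} (ha0 : 0 ≤ a) (ha1 : a < 1)
    (hs0 : 0 < s) (hs1 : s < 1) :
    nu ((arc a s)ᶜ) ≤ ENNReal.ofReal (1 - s) := by
  rw [prob_compl_eq_one_sub (arc_measurableSet a s)]
  calc (1:ℝ≥0∞) - nu (arc a s) ≤ 1 - ENNReal.ofReal s :=
        tsub_le_tsub le_rfl (ofReal_le_nu_arc ha0 ha1 hs0 hs1)
    _ = ENNReal.ofReal (1 - s) := by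
        rw [← ENNReal.ofReal_one, ← ENNReal.ofReal_sub _ hs0.le]

lemma ofReal_le_nu_arc_compl {a s : ℝ} (ha0 : 0 ≤ a) (h1 : a + s ≤ 1) (hs0 : 0 < s) :
    ENNReal.ofReal (1 - s) ≤ nu ((arc a s)ᶜ) := by
  rw [prob_compl_eq_one_sub (arc_measurableSet a s)]
  calc ENNReal.ofReal (1 - s) = 1 - ENNReal.ofReal s := by
        rw [← ENNReal.ofReal_one, ← ENNReal.ofReal_sub _ hs0.le]
    _ ≤ 1 - nu (arc a s) := tsub_le_tsub le_rfl (nu_arc_le ha0 h1 hs0)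

/-- Upper-tail probability bound. -/
lemma upper_tail (hn : 0 < n) (hX : ∀ i, Measurable (X i))
    (hind : iIndepFun X μ)
    (hu : ∀ i, Measure.map (X i) μ = nu)
    {δ s t : ℝ} (hδ0 : 0 < δ) (hδ1 : δ ≤ 1) (hs : 0 < s) (hs1 : s < 1)
    (hst : δ + s ≤ t) (ht1 : t < 1) :
    μ {ω | t ≤ maxSpacing (fun i => X i ω)} ≤
      (⌈1/δ⌉₊ : ℝ≥0∞) * ENNReal.ofReal ((1 - s)^n) := by
  classical
  set M := ⌈1/δ⌉₊ with hM
  set E : ℕ → Set Ωt := fun k => ⋂ j, X j ⁻¹' ((arc ((k:ℝ)*δ) s)ᶜ) with hE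
  have hincl : {ω | t ≤ maxSpacing (fun i => X i ω)} ⊆
      {ω | ¬ ∀ i, X i ω ∈ Set.Icc (0:ℝ) 1} ∪ ⋃ k ∈ Finset.range M, E k := by
    intro ω hω
    by_cases hgood : ∀ i, X i ω ∈ Set.Icc (0:ℝ) 1
    · right
      obtain ⟨k, hk, hfree⟩ := upper_det hn hgood hδ0 hδ1 hs hst ht1 hω
      refine Set.mem_biUnion (Finset.mem_range.2 hk) ?_
      rw [hE]
      exact Set.mem_iInter.2 fun j => hfree j
    · exact Or.inl hgood
  calc μ {ω | t ≤ maxSpacing (fun i => X i ω)}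
      ≤ μ ({ω | ¬ ∀ i, X i ω ∈ Set.Icc (0:ℝ) 1} ∪ ⋃ k ∈ Finset.range M, E k) :=
        measure_mono hincl
    _ ≤ μ {ω | ¬ ∀ i, X i ω ∈ Set.Icc (0:ℝ) 1} + μ (⋃ k ∈ Finset.range M, E k) :=
        measure_union_le _ _
    _ = μ (⋃ k ∈ Finset.range M, E k) := by rw [meas_bad hX hu, zero_add]
    _ ≤ ∑ k ∈ Finset.range M, μ (E k) := measure_biUnion_finset_le _ _
    _ ≤ ∑ _k ∈ Finset.range M, ENNReal.ofReal ((1 - s)^n) := by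
        refine Finset.sum_le_sum fun k hk => ?_
        rw [hE]
        have hkd : (k:ℝ) * δ < 1 := by
          have : (k:ℝ) < 1/δ := by
            exact_mod_cast (Nat.lt_ceil.1 (Finset.mem_range.1 hk))
          calc (k:ℝ) * δ < (1/δ) * δ := mul_lt_mul_of_pos_right this hδ0
            _ = 1 := by field_simp
        have hkd0 : (0:ℝ) ≤ (k:ℝ) * δ := by positivity
        rw [meas_iInter_preimage hX hind hu (arc_measurableSet _ _).compl]
        calc (nu ((arc ((k:ℝ)*δ) s)ᶜ))^n ≤ (ENNReal.ofReal (1 - s))^n := by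
              exact pow_le_pow_left' (nu_arc_compl_le hkd0 hkd hs hs1) n
          _ = ENNReal.ofReal ((1 - s)^n) := by
              rw [← ENNReal.ofReal_pow (by linarith)]
    _ = (M : ℝ≥0∞) * ENNReal.ofReal ((1 - s)^n) := by
        rw [Finset.sum_const, Finset.card_range, nsmul_eq_mul]

/-- Lower-tail probability bound. -/
lemma lower_tail (hn : 0 < n) (hX : ∀ i, Measurable (X i))
    (hind : iIndepFun X μ)
    (hu : ∀ i, Measure.map (X i) μ = nu)
    {t : ℝ} (ht0 : 0 < t) (ht2 : 2*t ≤ 1) :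
    μ {ω | maxSpacing (fun i => X i ω) < t} ≤
      ((⌊1/t⌋₊ : ℝ≥0∞) * ENNReal.ofReal ((1 - t)^n))⁻¹ := by
  classical
  set m := ⌊1/t⌋₊ with hm
  set A : ℕ → Set Ωt := fun k => ⋂ j, X j ⁻¹' ((arc ((k:ℝ)*t) t)ᶜ) with hA
  have hAm : ∀ k, MeasurableSet (A k) := fun k =>
    MeasurableSet.iInter fun j => (hX j) (arc_measurableSet _ _).compl
  have hanchor : ∀ k < m, 0 ≤ (k:ℝ)*t ∧ (k:ℝ)*t + t ≤ 1 := by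
    intro k hk
    constructor
    · positivity
    · have h1 : ((k:ℝ)+1) ≤ m := by exact_mod_cast hk
      have h2 : (m:ℝ) ≤ 1/t := Nat.floor_le (by positivity)
      have := mul_le_mul_of_nonneg_right (le_trans h1 h2) ht0.le
      rw [div_mul_cancel₀ _ (ne_of_gt ht0)] at this
      linarith
  set p : ℝ≥0∞ := ENNReal.ofReal ((1 - t)^n) with hp
  have hplb : ∀ k < m, p ≤ μ (A k) := by
    intro k hk
    obtain ⟨h1, h2⟩ := hanchor k hk
    rw [hA, meas_iInter_preimage hX hind hu (arc_measurableSet _ _).compl]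
    calc p = (ENNReal.ofReal (1-t))^n := by
          rw [hp, ENNReal.ofReal_pow (by linarith)]
      _ ≤ (nu ((arc ((k:ℝ)*t) t)ᶜ))^n :=
          pow_le_pow_left' (ofReal_le_nu_arc_compl h1 h2 ht0) n
  have hpair : ∀ k < m, ∀ l < m, k ≠ l → μ (A k ∩ A l) ≤ p * p := by
    intro k hk l hl hkl
    obtain ⟨hk1, hk2⟩ := hanchor k hk
    obtain ⟨hl1, hl2⟩ := hanchor l hl
    have hAkl : A k ∩ A l = ⋂ j, X j ⁻¹'
        ((arc ((k:ℝ)*t) t)ᶜ ∩ (arc ((l:ℝ)*t) t)ᶜ) := by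
      rw [hA]
      ext ω
      simp only [Set.mem_inter_iff, Set.mem_iInter, Set.mem_preimage]
      constructor
      · rintro ⟨h1, h2⟩ j; exact ⟨h1 j, h2 j⟩
      · intro h; exact ⟨fun j => (h j).1, fun j => (h j).2⟩
    have hnulb : nu ((arc ((k:ℝ)*t) t)ᶜ ∩ (arc ((l:ℝ)*t) t)ᶜ) ≤
        ENNReal.ofReal (1 - 2*t) := by
      rw [← Set.compl_union,
        prob_compl_eq_one_sub ((arc_measurableSet _ _).union (arc_measurableSet _ _))]
      have hun : ENNReal.ofReal (2*t) ≤ nu (arc ((k:ℝ)*t) t ∪ arc ((l:ℝ)*t) t) := by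
        have hs1 : Set.Ico ((k:ℝ)*t) ((k:ℝ)*t + t) ⊆ arc ((k:ℝ)*t) t :=
          Ico_subset_arc hk1 hk2
        have hs2 : Set.Ico ((l:ℝ)*t) ((l:ℝ)*t + t) ⊆ arc ((l:ℝ)*t) t :=
          Ico_subset_arc hl1 hl2
        have hdisj : Disjoint (Set.Ico ((k:ℝ)*t) ((k:ℝ)*t + t))
            (Set.Ico ((l:ℝ)*t) ((l:ℝ)*t + t)) := by
          rw [Set.disjoint_left]
          rintro y ⟨hy1, hy2⟩ ⟨hy3, hy4⟩
          rcases lt_or_gt_of_ne hkl with h' | h'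
          · have : ((k:ℝ)+1) ≤ l := by exact_mod_cast h'
            nlinarith
          · have : ((l:ℝ)+1) ≤ k := by exact_mod_cast h'
            nlinarith
        calc ENNReal.ofReal (2*t)
            = ENNReal.ofReal ((k:ℝ)*t + t - (k:ℝ)*t) + ENNReal.ofReal ((l:ℝ)*t + t - (l:ℝ)*t) := by
              rw [← ENNReal.ofReal_add (by linarith) (by linarith)]
              ring_nf
          _ = nu (Set.Ico ((k:ℝ)*t) ((k:ℝ)*t + t)) + nu (Set.Ico ((l:ℝ)*t) ((l:ℝ)*t + t)) := by
              rw [nu_Ico hk1 hk2, nu_Ico hl1 hl2]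
          _ = nu (Set.Ico ((k:ℝ)*t) ((k:ℝ)*t + t) ∪ Set.Ico ((l:ℝ)*t) ((l:ℝ)*t + t)) :=
              (measure_union hdisj measurableSet_Ico).symm
          _ ≤ nu (arc ((k:ℝ)*t) t ∪ arc ((l:ℝ)*t) t) :=
              measure_mono (Set.union_subset_union hs1 hs2)
      calc (1:ℝ≥0∞) - nu (arc ((k:ℝ)*t) t ∪ arc ((l:ℝ)*t) t)
          ≤ 1 - ENNReal.ofReal (2*t) := tsub_le_tsub le_rfl hun
        _ = ENNReal.ofReal (1 - 2*t) := by
            rw [← ENNReal.ofReal_one, ← ENNReal.ofReal_sub _ (by linarith)]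
    rw [hAkl, meas_iInter_preimage hX hind hu
      ((arc_measurableSet _ _).compl.inter (arc_measurableSet _ _).compl)]
    calc (nu ((arc ((k:ℝ)*t) t)ᶜ ∩ (arc ((l:ℝ)*t) t)ᶜ))^n
        ≤ (ENNReal.ofReal (1 - 2*t))^n := pow_le_pow_left' hnulb n
      _ ≤ p * p := by
          rw [hp, ← ENNReal.ofReal_pow (by linarith : (0:ℝ) ≤ 1 - 2*t),
            ← ENNReal.ofReal_mul (pow_nonneg (by linarith) n)]
          apply ENNReal.ofReal_le_ofReal
          calc (1 - 2*t)^n ≤ ((1-t)^2)^n := by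
                apply pow_le_pow_left₀ (by linarith) (by nlinarith)
            _ = (1-t)^n * (1-t)^n := by rw [← pow_mul, two_mul, pow_add]
  have hincl : {ω | maxSpacing (fun i => X i ω) < t} ⊆
      {ω | ¬ ∀ i, X i ω ∈ Set.Icc (0:ℝ) 1} ∪ (⋃ k ∈ Finset.range m, A k)ᶜ := by
    intro ω hω
    by_cases hgood : ∀ i, X i ω ∈ Set.Icc (0:ℝ) 1
    · right
      intro hmem
      obtain ⟨k, hk, hmemk⟩ : ∃ k ∈ Finset.range m, ω ∈ A k := by
        simpa using hmem
      obtain ⟨h1, h2⟩ := hanchor k (Finset.mem_range.1 hk)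
      have hfree : ∀ j, X j ω ∉ arc ((k:ℝ)*t) t := by
        rw [hA] at hmemk
        exact fun j => Set.mem_iInter.1 hmemk j
      exact absurd (lower_det hn hgood ht0 h1 h2 hfree) (not_le.2 hω)
    · exact Or.inl hgood
  calc μ {ω | maxSpacing (fun i => X i ω) < t}
      ≤ μ ({ω | ¬ ∀ i, X i ω ∈ Set.Icc (0:ℝ) 1} ∪ (⋃ k ∈ Finset.range m, A k)ᶜ) :=
        measure_mono hincl
    _ ≤ μ {ω | ¬ ∀ i, X i ω ∈ Set.Icc (0:ℝ) 1} + μ ((⋃ k ∈ Finset.range m, A k)ᶜ) :=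
        measure_union_le _ _
    _ = μ ((⋃ k ∈ Finset.range m, A k)ᶜ) := by rw [meas_bad hX hu, zero_add]
    _ ≤ ((m:ℝ≥0∞) * p)⁻¹ :=
        ENNReal.le_inv_iff_mul_le.2 (second_moment m A hAm p hplb hpair)

end prob

end MSP
end MSPwrap

open Filter ENNReal MSPwrap.MSP

set_option maxHeartbeats 2000000 in
/-- **Lemma (law of large numbers for `d_max`).** The sequence
`(n / log n) ⬝ d_max` converges to `1` in probability as `n → ∞`. -/
theorem tendsto_inProbability_maxSpacing_div_log
    (Ω : ℕ → Type*) (mΩ : ∀ n, MeasurableSpace (Ω n))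
    (μ : ∀ n, Measure (Ω n)) (hprob : ∀ n, IsProbabilityMeasure (μ n))
    (X : ∀ n, Fin n → Ω n → ℝ)
    (hmeas : ∀ n, 2 ≤ n → ∀ i, Measurable (X n i))
    (hindep : ∀ n, 2 ≤ n → iIndepFun (X n) (μ n))
    (hunif : ∀ n, 2 ≤ n → ∀ i,
      Measure.map (X n i) (μ n) = volume.restrict (Set.Icc (0 : ℝ) 1))
    :
    ∀ ε : ℝ, 0 < ε →
      Tendsto
        (fun n : ℕ =>
          ((μ n) {ω | ε <
            |((n : ℝ) / Real.log n) * maxSpacing (fun i => X n i ω) - 1|}).toReal)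
        atTop (nhds 0) := by
  classical
  intro ε hε
  set ε' : ℝ := min ε (1/2) with hε'def
  have hε'pos : 0 < ε' := lt_min hε (by norm_num)
  have hε'le : ε' ≤ 1/2 := min_le_right _ _
  have hε'ε : ε' ≤ ε := min_le_left _ _
  set L : ℕ → ℝ := fun n => Real.log n with hLdef
  set bound : ℕ → ℝ := fun n =>
    (4/ε' + 1) * Real.exp (-(ε'/2) * L n) + 2 * L n * Real.exp (-(ε'/2) * L n)
    with hbounddef
  have htlog : Tendsto L atTop atTop :=
    Real.tendsto_log_atTop.comp tendsto_natCast_atTop_atTop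
  have hℓ0 : Tendsto (fun n : ℕ => L n / n) atTop (nhds 0) := by
    have h0 := Real.isLittleO_log_id_atTop.tendsto_div_nhds_zero
    have := h0.comp (tendsto_natCast_atTop_atTop (R := ℝ))
    exact this
  -- the bound tends to 0
  have hb1 : Tendsto (fun n : ℕ => Real.exp (-(ε'/2) * L n)) atTop (nhds 0) := by
    apply Real.tendsto_exp_atBot.comp
    have h1 : Tendsto (fun n : ℕ => (ε'/2) * L n) atTop atTop :=
      htlog.const_mul_atTop (by positivity)
    simpa [neg_mul] using tendsto_neg_atBot_iff.2 h1
  have hb2 : Tendsto (fun n : ℕ => 2 * L n * Real.exp (-(ε'/2) * L n)) atTop (nhds 0) := by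
    have h0 : Tendsto (fun y : ℝ => y * Real.exp (-y)) atTop (nhds 0) := by
      simpa using Real.tendsto_pow_mul_exp_neg_atTop_nhds_zero 1
    have h1 : Tendsto (fun n : ℕ => (ε'/2) * L n) atTop atTop :=
      htlog.const_mul_atTop (by positivity)
    have h2 := (h0.comp h1).const_mul (4/ε')
    rw [mul_zero] at h2
    refine Tendsto.congr (fun n => ?_) h2
    simp only [Function.comp]
    field_simp
    ring
  have hbound0 : Tendsto bound atTop (nhds 0) := by
    rw [hbounddef]
    simpa using (hb1.const_mul (4/ε' + 1)).add hb2
  refine squeeze_zero' (Eventually.of_forall fun n => ENNReal.toReal_nonneg) ?_ hbound0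
  -- the eventual inequality
  have hev : ∀ᶠ n : ℕ in atTop,
      2 ≤ n ∧ 1 ≤ L n ∧ L n / n ≤ 1/2 ∧ L n / n ≤ ε'/4 := by
    have e1 := eventually_ge_atTop 2
    have e2 := htlog.eventually_ge_atTop 1
    have e3 := hℓ0.eventually (gt_mem_nhds (show (0:ℝ) < 1/2 by norm_num))
    have e4 := hℓ0.eventually (gt_mem_nhds (show (0:ℝ) < ε'/4 by positivity))
    filter_upwards [e1, e2, e3, e4] with n h1 h2 h3 h4
    exact ⟨h1, h2, h3.le, h4.le⟩
  filter_upwards [hev] with n ⟨hn2, hL1, hhalf, hquarter⟩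
  haveI := hprob n
  have hn0 : (0:ℝ) < n := by positivity
  have hLpos : 0 < L n := by linarith
  have hℓpos : 0 < L n / n := div_pos hLpos hn0
  set ℓ : ℝ := L n / n with hℓdef
  set t : ℝ := (1 + ε') * ℓ with htdef
  set t' : ℝ := (1 - ε') * ℓ with ht'def
  set δ : ℝ := (ε'/4) * ℓ with hδdef
  set s : ℝ := (1 + ε'/2) * ℓ with hsdef
  have hℓn : ℓ * n = L n := by rw [hℓdef]; field_simp
  have ht'pos : 0 < t' := by
    apply mul_pos (by linarith) hℓpos
  have ht'le : t' ≤ ℓ := by nlinarith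
  have hsle : s ≤ (5/4) * ℓ := by nlinarith
  have hslt1 : s < 1 := by nlinarith
  have htlt1 : t < 1 := by nlinarith
  have hδle1 : δ ≤ 1 := by nlinarith
  have hδpos : 0 < δ := by positivity
  have hspos : 0 < s := by nlinarith
  have hδst : δ + s ≤ t := by nlinarith
  have h2t' : 2 * t' ≤ 1 := by nlinarith
  have hu : ∀ i, Measure.map (X n i) (μ n) = nu :=
    fun i => by rw [hunif n hn2 i]; rfl
  have hX := hmeas n hn2
  have hind := hindep n hn2
  have hnpos : 0 < n := by omega
  -- event inclusion
  have hincl : {ω | ε < |((n:ℝ) / Real.log n) * maxSpacing (fun i => X n i ω) - 1|}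
      ⊆ {ω | t ≤ maxSpacing (fun i => X n i ω)}
        ∪ {ω | maxSpacing (fun i => X n i ω) < t'} := by
    intro ω hω
    set d := maxSpacing (fun i => X n i ω) with hd
    have hω' : ε' < |(n / L n) * d - 1| := lt_of_le_of_lt hε'ε hω
    rcases lt_abs.1 hω' with hcase | hcase
    · left
      show t ≤ d
      have h1 : (1 + ε') < (n / L n) * d := by linarith
      have h2 : (1 + ε') * (L n / n) < ((n / L n) * d) * (L n / n) :=
        mul_lt_mul_of_pos_right h1 hℓpos
      have h3 : ((n:ℝ) / L n) * d * (L n / n) = d := by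
        field_simp
      rw [h3] at h2
      rw [htdef, hℓdef]
      linarith
    · right
      show d < t'
      have h1 : (n / L n) * d < 1 - ε' := by linarith
      have h2 : ((n / L n) * d) * (L n / n) < (1 - ε') * (L n / n) :=
        mul_lt_mul_of_pos_right h1 hℓpos
      have h3 : ((n:ℝ) / L n) * d * (L n / n) = d := by
        field_simp
      rw [h3] at h2
      rw [ht'def, hℓdef]
      linarith
  -- upper tail estimate (real form)
  have hUb : ((⌈1/δ⌉₊ : ℝ)) * (1 - s)^n ≤ (4/ε' + 1) * Real.exp (-(ε'/2) * L n) := by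
    have hceil : ((⌈1/δ⌉₊ : ℝ)) ≤ (4/ε' + 1) * n := by
      have h1 : ((⌈1/δ⌉₊ : ℝ)) < 1/δ + 1 := Nat.ceil_lt_add_one (by positivity)
      have h2 : 1/δ = 4 * n / (ε' * L n) := by
        rw [hδdef, hℓdef]; field_simp; try ring
      have h3 : 4 * (n:ℝ) / (ε' * L n) ≤ 4 * n / ε' := by
        rw [div_le_div_iff₀ (mul_pos hε'pos hLpos) hε'pos]
        nlinarith [mul_nonneg (mul_nonneg (by linarith : (0:ℝ) ≤ 4*(n:ℝ)) hε'pos.le)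
          (by linarith : (0:ℝ) ≤ L n - 1)]
      have h4 : 4 * (n:ℝ) / ε' = (4/ε') * n := by ring
      have h5 : (1:ℝ) ≤ n := by exact_mod_cast (by omega : 1 ≤ n)
      nlinarith
    have hpow : (1 - s)^n ≤ Real.exp (-(1 + ε'/2) * L n) := by
      have h1 : (0:ℝ) ≤ 1 - s := by linarith
      have h2 : 1 - s ≤ Real.exp (-s) := by
        have := Real.add_one_le_exp (-s); linarith
      calc (1 - s)^n ≤ (Real.exp (-s))^n := pow_le_pow_left₀ h1 h2 n
        _ = Real.exp ((n:ℝ) * (-s)) := (Real.exp_nat_mul _ n).symm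
        _ = Real.exp (-(1 + ε'/2) * L n) := by
            congr 1
            rw [hsdef]
            have : (n:ℝ) * ((1 + ε'/2) * ℓ) = (1 + ε'/2) * (ℓ * n) := by ring
            rw [show (n:ℝ) * -((1 + ε'/2) * ℓ) = -((1 + ε'/2) * (ℓ * n)) by ring, hℓn]
            ring
    have hexpn : (n:ℝ) * Real.exp (-(1 + ε'/2) * L n) = Real.exp (-(ε'/2) * L n) := by
      rw [show (n:ℝ) = Real.exp (L n) from (Real.exp_log hn0).symm, ← Real.exp_add]
      congr 1; ring
    calc ((⌈1/δ⌉₊ : ℝ)) * (1 - s)^n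
        ≤ ((4/ε' + 1) * n) * Real.exp (-(1 + ε'/2) * L n) := by
          have c1 : (0:ℝ) < 4/ε' + 1 := by
            have : (0:ℝ) < 4/ε' := div_pos (by norm_num) hε'pos
            linarith
          apply mul_le_mul hceil hpow (pow_nonneg (by linarith) n) (mul_pos c1 hn0).le
      _ = (4/ε' + 1) * ((n:ℝ) * Real.exp (-(1 + ε'/2) * L n)) := by ring
      _ = (4/ε' + 1) * Real.exp (-(ε'/2) * L n) := by rw [hexpn]
  -- lower tail estimate (real form)
  set g : ℝ := 2 * L n * Real.exp (-(ε'/2) * L n) with hgdef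
  have hgpos : 0 < g := by positivity
  have hLow : g⁻¹ ≤ ((⌊1/t'⌋₊ : ℝ)) * (1 - t')^n := by
    have hm : (n:ℝ) / (2 * L n) ≤ (⌊1/t'⌋₊ : ℝ) := by
      have h1 : 1/t' - 1 < (⌊1/t'⌋₊ : ℝ) := Nat.sub_one_lt_floor _
      have h2 : (n:ℝ) / L n ≤ 1/t' := by
        have h2a := one_div_le_one_div_of_le ht'pos ht'le
        rwa [hℓdef, one_div_div] at h2a
      have h3 : (n:ℝ) / (2 * L n) ≤ (n:ℝ) / L n - 1 := by
        have h4 : (1:ℝ) ≤ (n:ℝ) / (2 * L n) := by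
          rw [le_div_iff₀ (by positivity)]
          have := hhalf
          rw [div_le_iff₀ hn0] at this
          linarith
        have h5 : (n:ℝ) / L n = 2 * ((n:ℝ) / (2 * L n)) := by field_simp
        linarith
      linarith
    have hpw : Real.exp (-(1 - ε'/2) * L n) ≤ (1 - t')^n := by
      have h1t' : t' ≤ 1/2 := by linarith [ht'le, hhalf]
      have h1t'' : 0 < 1 - t' := by linarith
      set u : ℝ := t' / (1 - t') with hudef
      have hu0 : 0 ≤ u := by positivity
      have hexpu : Real.exp (-u) ≤ 1 - t' := by
        have h1 : 1 + u ≤ Real.exp u := by have := Real.add_one_le_exp u; linarith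
        have h1p : (0:ℝ) < 1 + u := by positivity
        have h2 : (1 + u) * (1 - t') = 1 := by
          rw [hudef]; field_simp; ring
        have h4 : (1 + u) * Real.exp (-u) ≤ 1 := by
          calc (1+u) * Real.exp (-u) ≤ Real.exp u * Real.exp (-u) :=
                mul_le_mul_of_nonneg_right h1 (Real.exp_pos _).le
            _ = 1 := by rw [← Real.exp_add]; simp
        have h5 : (1+u) * Real.exp (-u) ≤ (1+u) * (1 - t') := h4.trans_eq h2.symm
        exact le_of_mul_le_mul_left h5 h1p
      have hnu : (n:ℝ) * u ≤ (1 - ε'/2) * L n := by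
        have h1 : u ≤ t' * (1 + 2*t') := by
          rw [hudef, div_le_iff₀ h1t'']
          nlinarith [mul_nonneg (mul_self_nonneg t') (by linarith : (0:ℝ) ≤ 1 - 2*t')]
        have h2 : (n:ℝ) * t' = (1 - ε') * L n := by
          rw [ht'def, show (n:ℝ) * ((1-ε') * ℓ) = (1-ε') * (ℓ * n) by ring, hℓn]
        have h3 : (n:ℝ) * (t' * (1 + 2*t')) = (1-ε') * L n + 2*t'*((1-ε') * L n) := by
          rw [← h2]; ring
        have h4 : 2*t'*((1-ε') * L n) ≤ (ε'/2) * L n := by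
          have h5 : t' ≤ ℓ := ht'le
          have h6a : 2*t'*((1-ε') * L n) ≤ 2*t'*L n := by
            nlinarith [mul_nonneg ht'pos.le (mul_nonneg hε'pos.le hLpos.le)]
          have h6 : 2*t'*((1-ε') * L n) ≤ 2*ℓ*L n := by
            nlinarith [mul_nonneg (sub_nonneg.2 ht'le) hLpos.le]
          have h7 : 2*ℓ*L n ≤ (ε'/2) * L n := by
            have : ℓ ≤ ε'/4 := hquarter
            nlinarith
          linarith
        have h8 : (n:ℝ) * u ≤ (n:ℝ) * (t' * (1+2*t')) := by
          apply mul_le_mul_of_nonneg_left h1 (by positivity)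
        linarith
      calc Real.exp (-(1 - ε'/2) * L n) ≤ Real.exp (-(n * u)) := by
            apply Real.exp_le_exp.2; linarith
        _ = (Real.exp (-u))^n := by
            rw [show -((n:ℝ) * u) = (n:ℝ)*(-u) by ring, Real.exp_nat_mul]
        _ ≤ (1 - t')^n := pow_le_pow_left₀ (by positivity) hexpu n
    have hginv : g⁻¹ = (n:ℝ) / (2 * L n) * Real.exp (-(1 - ε'/2) * L n) := by
      have e1 : Real.exp (-(ε'/2)*L n) * (Real.exp (L n) * Real.exp (-(1-ε'/2)*L n)) = 1 := by
        rw [← Real.exp_add, ← Real.exp_add,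
          show -(ε'/2)*L n + (L n + -(1-ε'/2)*L n) = 0 by ring, Real.exp_zero]
      have hprod : g * ((n:ℝ)/(2*L n) * Real.exp (-(1-ε'/2)*L n)) = 1 := by
        rw [hgdef, show (n:ℝ) = Real.exp (L n) from (Real.exp_log hn0).symm]
        have hLne : (2:ℝ) * L n ≠ 0 := by positivity
        calc 2 * L n * Real.exp (-(ε'/2)*L n)
              * (Real.exp (L n)/(2*L n) * Real.exp (-(1-ε'/2)*L n))
            = (Real.exp (-(ε'/2)*L n) * (Real.exp (L n) * Real.exp (-(1-ε'/2)*L n)))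
              * (2*L n/(2*L n)) := by ring
          _ = 1 := by rw [e1, div_self hLne, mul_one]
      exact inv_eq_of_mul_eq_one_right hprod
    rw [hginv]
    apply mul_le_mul hm hpw (by positivity) (by positivity)
  -- combine
  have hup := upper_tail (μ := μ n) hnpos hX hind hu hδpos hδle1 hspos hslt1 hδst htlt1
  have hlo := lower_tail (μ := μ n) hnpos hX hind hu ht'pos h2t'
  have hmeasT : (μ n) {ω | ε < |((n:ℝ) / Real.log n) * maxSpacing (fun i => X n i ω) - 1|}
      ≤ ENNReal.ofReal (bound n) := by
    calc (μ n) {ω | ε < |((n:ℝ) / Real.log n) * maxSpacing (fun i => X n i ω) - 1|}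
        ≤ (μ n) ({ω | t ≤ maxSpacing (fun i => X n i ω)}
            ∪ {ω | maxSpacing (fun i => X n i ω) < t'}) := measure_mono hincl
      _ ≤ (μ n) {ω | t ≤ maxSpacing (fun i => X n i ω)}
            + (μ n) {ω | maxSpacing (fun i => X n i ω) < t'} := measure_union_le _ _
      _ ≤ ENNReal.ofReal ((4/ε' + 1) * Real.exp (-(ε'/2) * L n)) + ENNReal.ofReal g := by
          gcongr
          · calc (μ n) {ω | t ≤ maxSpacing (fun i => X n i ω)}
                ≤ (⌈1/δ⌉₊ : ℝ≥0∞) * ENNReal.ofReal ((1 - s)^n) := hup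
              _ = ENNReal.ofReal (((⌈1/δ⌉₊:ℝ)) * (1 - s)^n) := by
                  rw [ENNReal.ofReal_mul (by positivity), ENNReal.ofReal_natCast]
              _ ≤ ENNReal.ofReal ((4/ε' + 1) * Real.exp (-(ε'/2) * L n)) :=
                  ENNReal.ofReal_le_ofReal hUb
          · calc (μ n) {ω | maxSpacing (fun i => X n i ω) < t'}
                ≤ ((⌊1/t'⌋₊ : ℝ≥0∞) * ENNReal.ofReal ((1 - t')^n))⁻¹ := hlo
              _ ≤ (ENNReal.ofReal g⁻¹)⁻¹ := by
                  apply ENNReal.inv_le_inv.2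
                  calc ENNReal.ofReal g⁻¹
                      ≤ ENNReal.ofReal (((⌊1/t'⌋₊:ℝ)) * (1 - t')^n) :=
                        ENNReal.ofReal_le_ofReal hLow
                    _ = (⌊1/t'⌋₊ : ℝ≥0∞) * ENNReal.ofReal ((1 - t')^n) := by
                        rw [ENNReal.ofReal_mul (by positivity), ENNReal.ofReal_natCast]
              _ = ENNReal.ofReal g := by
                  rw [ENNReal.ofReal_inv_of_pos hgpos, inv_inv]
      _ = ENNReal.ofReal (bound n) := by
          rw [hbounddef, hgdef, ← ENNReal.ofReal_add (by positivity) (by positivity)]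
  exact ENNReal.toReal_le_of_le_ofReal (by positivity) hmeasT
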